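/- If a connected finite graph G isometrically embeds into the sphere S^n (n ≥ 2) of some radius r, then G is a path graph, a cycle graph, a complete graph on at most n+2 vertices, or a subgraph of G_n. -/

import Mathlib

open Real

/-- Geodesic distance on the sphere of radius `r` centered at the origin of `ℝ^d`:
`d(p,q) = r · arccos(⟨p,q⟩ / r²)`. -/
noncomputable def sphereGeoDist {d : ℕ} (r : ℝ) (p q : EuclideanSpace ℝ (Fin d)) : ℝ :=
  r * Real.arccos ((inner ℝ p q : ℝ) / r ^ 2)

/-- The abstract graph `G_n`: vertices are the `2(n+1)` signed standard coordinate
directions (an index together with a sign), adjacent iff non-antipodal, i.e. the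
indices differ. -/
def GnAbs (n : ℕ) : SimpleGraph (Fin (n + 1) × Bool) where
  Adj a b := a.1 ≠ b.1
  symm := ⟨fun _ _ h => Ne.symm h⟩
  loopless := ⟨fun _ h => h rfl⟩

namespace SphereAux
open SimpleGraph


variable {V : Type*} {G : SimpleGraph V}

lemma getVert_support_get {u v : V} (p : G.Walk u v) :
    ∀ i, ∀ hi : i < p.support.length, p.getVert i = p.support.get ⟨i, hi⟩ := by
  induction p with
  | nil =>
    intro i hi
    simp only [Walk.support_nil, List.length_singleton] at hi
    interval_cases i
    simp [Walk.support_nil]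
  | @cons u w v h q ih =>
    intro i hi
    cases i with
    | zero => simp [Walk.support_cons]
    | succ i =>
      simp only [Walk.support_cons, List.length_cons] at hi ⊢
      rw [Walk.getVert_cons_succ]
      exact ih i (by simpa using Nat.lt_of_succ_lt_succ hi)

lemma getVert_inj {u v : V} {p : G.Walk u v} (hp : p.IsPath) {i j : ℕ}
    (hi : i ≤ p.length) (hj : j ≤ p.length) (h : p.getVert i = p.getVert j) : i = j := by
  have hi' : i < p.support.length := by rw [Walk.length_support]; omega
  have hj' : j < p.support.length := by rw [Walk.length_support]; omega
  rw [getVert_support_get p i hi', getVert_support_get p j hj'] at h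
  have := List.nodup_iff_injective_get.mp hp.support_nodup h
  exact congrArg Fin.val this

lemma exists_boundary {s : Set V} : ∀ {u v : V} (_ : G.Walk u v), u ∉ s → v ∈ s →
    ∃ x y, x ∉ s ∧ y ∈ s ∧ G.Adj x y := by
  intro u v q
  induction q with
  | nil => intro hu hv; exact absurd hv hu
  | @cons u w v h q ih =>
    intro hu hv
    by_cases hw : w ∈ s
    · exact ⟨u, w, hu, hw, h⟩
    · exact ih hw hv

theorem path_or_cycle [Fintype V] (G : SimpleGraph V) (hconn : G.Connected)
    (hdeg : ∀ v a b c : V, G.Adj v a → G.Adj v b → G.Adj v c →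
      a ≠ b → a ≠ c → b ≠ c → False) :
    (∃ k : ℕ, 1 ≤ k ∧ Nonempty (G ≃g SimpleGraph.pathGraph k)) ∨
    (∃ k : ℕ, 3 ≤ k ∧ Nonempty (G ≃g SimpleGraph.cycleGraph k)) := by
  classical
  have hne : Nonempty V := hconn.nonempty
  obtain ⟨v₀⟩ := hne
  set P : ℕ → Prop := fun k => ∃ (a b : V) (p : G.Walk a b), p.IsPath ∧ p.length = k with hP
  have hP0 : P 0 := ⟨v₀, v₀, Walk.nil, Walk.IsPath.nil, rfl⟩
  have hbd : ∀ k, P k → k ≤ Fintype.card V := by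
    rintro k ⟨a, b, p, hp, rfl⟩; exact hp.length_lt.le
  set m := Nat.findGreatest P (Fintype.card V) with hm_def
  have hm : P m := Nat.findGreatest_spec (Nat.zero_le _) hP0
  have hmax : ∀ (a b : V) (p : G.Walk a b), p.IsPath → p.length ≤ m := by
    intro a b p hp
    by_contra hgt
    push_neg at hgt
    exact Nat.findGreatest_is_greatest hgt (hbd _ ⟨a, b, p, hp, rfl⟩) ⟨a, b, p, hp, rfl⟩
  obtain ⟨a, b, p, hp, hl⟩ := hm
  -- spanning
  have hspan : ∀ w, w ∈ p.support := by
    intro w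
    by_contra hw
    obtain ⟨q⟩ := hconn.preconnected w a
    obtain ⟨x, y, hx, hy, hxy⟩ :=
      exists_boundary (s := {v | v ∈ p.support}) q hw p.start_mem_support
    simp only [Set.mem_setOf_eq] at hx hy
    rw [Walk.mem_support_iff_exists_getVert] at hy
    obtain ⟨i, rfl, him⟩ := hy
    rw [hl] at him
    rcases Nat.eq_zero_or_pos i with hi0 | hipos
    · -- y = a, extend at front
      subst hi0
      rw [p.getVert_zero] at hxy
      have hxs : x ∉ p.support := hx
      have hp' : (Walk.cons hxy p).IsPath := hp.cons hxs
      have := hmax _ _ _ hp'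
      rw [Walk.length_cons, hl] at this
      omega
    · rcases Nat.lt_or_ge i m with him' | him''
      · -- interior
        have h1 : G.Adj (p.getVert i) (p.getVert (i + 1)) :=
          p.adj_getVert_succ (by omega)
        have h2 : G.Adj (p.getVert i) (p.getVert (i - 1)) := by
          have := p.adj_getVert_succ (i := i - 1) (by omega)
          rw [Nat.sub_add_cancel hipos] at this
          exact this.symm
        have h3 : G.Adj (p.getVert i) x := hxy.symm
        refine hdeg _ _ _ _ h1 h2 h3 ?_ ?_ ?_
        · intro h
          have := getVert_inj hp (by omega) (by omega) h
          omega
        · intro h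
          exact hx (by rw [← h]; exact Walk.mem_support_iff_exists_getVert.mpr ⟨i+1, rfl, by omega⟩)
        · intro h
          exact hx (by rw [← h]; exact Walk.mem_support_iff_exists_getVert.mpr ⟨i-1, rfl, by omega⟩)
      · -- y = b, extend at end
        have hib : i = m := le_antisymm him him''
        have hyb : p.getVert i = b := by rw [hib, ← hl]; exact p.getVert_length
        rw [hyb] at hxy
        have hxs : x ∉ p.reverse.support := by
          rw [Walk.support_reverse]; simpa using hx
        have hp' : (Walk.cons hxy p.reverse).IsPath := hp.reverse.cons hxs
        have := hmax _ _ _ hp'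
        rw [Walk.length_cons, Walk.length_reverse, hl] at this
        omega
  -- bijection
  have hginj : Function.Injective (fun i : Fin (m + 1) => p.getVert i.val) := by
    intro i j h
    exact Fin.ext (getVert_inj hp (by omega) (by omega) h)
  have hgsurj : Function.Surjective (fun i : Fin (m + 1) => p.getVert i.val) := by
    intro w
    obtain ⟨i, hiw, him⟩ := Walk.mem_support_iff_exists_getVert.mp (hspan w)
    exact ⟨⟨i, by omega⟩, hiw⟩
  let e : Fin (m + 1) ≃ V := Equiv.ofBijective _ ⟨hginj, hgsurj⟩
  have hcard : Fintype.card V = m + 1 := by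
    rw [← Fintype.card_fin (m + 1)]
    exact (Fintype.card_congr e).symm
  -- adjacency characterization
  have key : ∀ i j : ℕ, i < j → j ≤ m →
      (G.Adj (p.getVert i) (p.getVert j) ↔ (j = i + 1 ∨ (i = 0 ∧ j = m ∧ G.Adj a b))) := by
    intro i j hij hjm
    constructor
    · intro hadj
      by_cases hj1 : j = i + 1
      · exact Or.inl hj1
      · have hij2 : i + 2 ≤ j := by omega
        rcases Nat.eq_zero_or_pos i with hi0 | hipos
        · subst hi0
          by_cases hjm' : j = m
          · refine Or.inr ⟨rfl, hjm', ?_⟩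
            have h0 : p.getVert 0 = a := p.getVert_zero
            have hb : p.getVert j = b := by rw [hjm', ← hl]; exact p.getVert_length
            rwa [h0, hb] at hadj
          · have hjlt : j < m := by omega
            have h1 : G.Adj (p.getVert j) (p.getVert (j + 1)) :=
              p.adj_getVert_succ (by omega)
            have h2 : G.Adj (p.getVert j) (p.getVert (j - 1)) := by
              have := p.adj_getVert_succ (i := j - 1) (by omega)
              rw [Nat.sub_add_cancel (by omega)] at this
              exact this.symm
            exfalso
            refine hdeg _ _ _ _ h1 h2 hadj.symm ?_ ?_ ?_ <;>
              { intro h; have := getVert_inj hp (by omega) (by omega) h; omega }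
        · have h1 : G.Adj (p.getVert i) (p.getVert (i + 1)) :=
            p.adj_getVert_succ (by omega)
          have h2 : G.Adj (p.getVert i) (p.getVert (i - 1)) := by
            have := p.adj_getVert_succ (i := i - 1) (by omega)
            rw [Nat.sub_add_cancel hipos] at this
            exact this.symm
          exfalso
          refine hdeg _ _ _ _ h1 h2 hadj ?_ ?_ ?_ <;>
            { intro h; have := getVert_inj hp (by omega) (by omega) h; omega }
    · rintro (rfl | ⟨rfl, rfl, hab⟩)
      · exact p.adj_getVert_succ (by omega)
      · have h0 : p.getVert 0 = a := p.getVert_zero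
        have hb : p.getVert m = b := by rw [← hl]; exact p.getVert_length
        rwa [h0, hb]
  have hsub : ∀ a c : Fin (m + 1), (a - c).val = (m + 1 - c.val + a.val) % (m + 1) := by
    intro a c; rw [Fin.sub_def]
  by_cases hcyc : 2 ≤ m ∧ G.Adj a b
  · -- cycle
    right
    refine ⟨m + 1, by omega, ?_⟩
    have hhalf : ∀ i j : Fin (m + 1), i.val < j.val →
        (G.Adj (e i) (e j) ↔ (cycleGraph (m + 1)).Adj i j) := by
      intro i j hij
      have hjm : j.val ≤ m := by omega
      have h1 : (m + 1 - i.val + j.val) % (m + 1) = j.val - i.val := by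
        rw [Nat.mod_eq_sub_mod (by omega), Nat.mod_eq_of_lt (by omega)]
        omega
      have h2 : (m + 1 - j.val + i.val) % (m + 1) = m + 1 - j.val + i.val :=
        Nat.mod_eq_of_lt (by omega)
      rw [show (G.Adj (e i) (e j) ↔ _) from key i.val j.val hij hjm, cycleGraph_adj',
        hsub, hsub, h1, h2]
      constructor
      · rintro (h | ⟨hi0, hjm', _⟩)
        · exact Or.inr (by omega)
        · exact Or.inl (by omega)
      · rintro (h | h)
        · exact Or.inr ⟨by omega, by omega, hcyc.2⟩
        · exact Or.inl (by omega)
    have hiff : ∀ i j : Fin (m + 1), G.Adj (e i) (e j) ↔ (cycleGraph (m + 1)).Adj i j := by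
      intro i j
      rcases lt_trichotomy i.val j.val with h | h | h
      · exact hhalf i j h
      · have : i = j := Fin.ext h
        subst this
        constructor
        · intro hadj; exact (G.loopless.irrefl _ hadj).elim
        · intro hadj; exact ((cycleGraph (m + 1)).loopless.irrefl _ hadj).elim
      · rw [adj_comm, (cycleGraph (m + 1)).adj_comm]
        exact hhalf j i h
    exact ⟨(RelIso.mk e (hiff _ _) : cycleGraph (m + 1) ≃g G).symm⟩
  · -- path
    left
    refine ⟨m + 1, by omega, ?_⟩
    have hhalf : ∀ i j : Fin (m + 1), i.val < j.val →
        (G.Adj (e i) (e j) ↔ (pathGraph (m + 1)).Adj i j) := by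
      intro i j hij
      have hjm : j.val ≤ m := by omega
      rw [show (G.Adj (e i) (e j) ↔ _) from key i.val j.val hij hjm, pathGraph_adj]
      constructor
      · rintro (h | ⟨hi0, hjm', hab⟩)
        · exact Or.inl (by omega)
        · have hm1 : m ≤ 1 := by
            by_contra hm2
            exact hcyc ⟨by omega, hab⟩
          exact Or.inl (by omega)
      · rintro (h | h)
        · exact Or.inl (by omega)
        · omega
    have hiff : ∀ i j : Fin (m + 1), G.Adj (e i) (e j) ↔ (pathGraph (m + 1)).Adj i j := by
      intro i j
      rcases lt_trichotomy i.val j.val with h | h | h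
      · exact hhalf i j h
      · have : i = j := Fin.ext h
        subst this
        constructor
        · intro hadj; exact (G.loopless.irrefl _ hadj).elim
        · intro hadj; exact ((pathGraph (m + 1)).loopless.irrefl _ hadj).elim
      · rw [adj_comm, (pathGraph (m + 1)).adj_comm]
        exact hhalf j i h
    exact ⟨(RelIso.mk e (hiff _ _) : pathGraph (m + 1) ≃g G).symm⟩



lemma keyL {d : ℕ} {r t : ℝ} (hr : 0 < r) (ht0 : 0 < t) (ht1 : t < 1)
    {Y A B C : EuclideanSpace ℝ (Fin d)}
    (hY : ‖Y‖ = r) (hA : ‖A‖ = r) (hB : ‖B‖ = r)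
    (hYA : (inner ℝ Y A : ℝ) = r ^ 2 * t) (hYB : (inner ℝ Y B : ℝ) = r ^ 2 * t)
    (hYC : (inner ℝ Y C : ℝ) = r ^ 2 * t)
    (hAB : (inner ℝ A B : ℝ) = r ^ 2 * (2 * t ^ 2 - 1))
    (hAC : (inner ℝ A C : ℝ) = r ^ 2 * t ∨ (inner ℝ A C : ℝ) = r ^ 2 * (2 * t ^ 2 - 1))
    (hBC : (inner ℝ B C : ℝ) = r ^ 2 * t ∨ (inner ℝ B C : ℝ) = r ^ 2 * (2 * t ^ 2 - 1)) :
    False := by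
  have e1 : (inner ℝ B B : ℝ) = r ^ 2 := by rw [real_inner_self_eq_norm_sq, hB]
  have e2 : (inner ℝ Y Y : ℝ) = r ^ 2 := by rw [real_inner_self_eq_norm_sq, hY]
  have e3 : (inner ℝ A A : ℝ) = r ^ 2 := by rw [real_inner_self_eq_norm_sq, hA]
  have hAY : (inner ℝ A Y : ℝ) = r ^ 2 * t := by rw [real_inner_comm]; exact hYA
  have hBY : (inner ℝ B Y : ℝ) = r ^ 2 * t := by rw [real_inner_comm]; exact hYB
  have hBA : (inner ℝ B A : ℝ) = r ^ 2 * (2 * t ^ 2 - 1) := by rw [real_inner_comm]; exact hAB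
  have hBeq : B = (2 * t) • Y - A := by
    have hz : (inner ℝ (B - ((2 * t) • Y - A)) (B - ((2 * t) • Y - A)) : ℝ) = 0 := by
      simp only [inner_sub_left, inner_sub_right, inner_smul_left, inner_smul_right,
        conj_trivial]
      linear_combination e1 + 4 * t ^ 2 * e2 + e3 - 2 * t * hBY - 2 * t * hYB + hBA + hAB -
        2 * t * hYA - 2 * t * hAY
    exact sub_eq_zero.mp (inner_self_eq_zero.mp hz)
  have hsum : (inner ℝ B C : ℝ) = 2 * r ^ 2 * t ^ 2 - inner ℝ A C := by
    rw [hBeq]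
    simp only [inner_sub_left, inner_smul_left, conj_trivial]
    rw [hYC]; ring
  have hr2 : 0 < r ^ 2 := by positivity
  rcases hAC with h1 | h1 <;> rcases hBC with h2 | h2 <;> rw [h1, h2] at hsum <;>
    nlinarith [hsum, hr2, ht0, ht1, mul_pos hr2 (mul_pos ht0 (sub_pos.mpr ht1)),
      mul_pos hr2 (sub_pos.mpr ht1),
      mul_pos hr2 (mul_pos (sub_pos.mpr ht1) (show (0:ℝ) < 1 + t by linarith))]



lemma card_le_of_equal_inner {n : ℕ} {r c : ℝ} (hc : c ≠ r ^ 2)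
    {V : Type*} [Fintype V] [Nonempty V] (f : V → EuclideanSpace ℝ (Fin (n + 1)))
    (hnorm : ∀ x, ‖f x‖ = r) (hinner : ∀ x y : V, x ≠ y → (inner ℝ (f x) (f y) : ℝ) = c) :
    Fintype.card V ≤ n + 2 := by
  classical
  let T : (V → ℝ) →ₗ[ℝ] EuclideanSpace ℝ (Fin (n + 1)) :=
    { toFun := fun a => ∑ i, a i • f i
      map_add' := by intro a b; simp [add_smul, Finset.sum_add_distrib]
      map_smul' := by intro s a; simp [smul_smul, Finset.smul_sum] }
  have hSj : ∀ a : V → ℝ, T a = 0 → ∀ j, a j * (r ^ 2 - c) + (∑ i, a i) * c = 0 := by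
    intro a ha j
    have h0 : (inner ℝ (f j) (T a) : ℝ) = 0 := by rw [ha]; simp
    have hTa : T a = ∑ i, a i • f i := rfl
    rw [hTa, inner_sum] at h0
    simp only [real_inner_smul_right] at h0
    rw [← Finset.add_sum_erase _ _ (Finset.mem_univ j)] at h0
    rw [real_inner_self_eq_norm_sq, hnorm] at h0
    have herase : ∑ i ∈ Finset.univ.erase j, a i * (inner ℝ (f j) (f i) : ℝ)
        = (∑ i, a i - a j) * c := by
      rw [← Finset.sum_erase_eq_sub (Finset.mem_univ j), Finset.sum_mul]
      refine Finset.sum_congr rfl fun i hi => ?_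
      rw [hinner j i (Ne.symm (Finset.ne_of_mem_erase hi))]
    rw [herase] at h0
    ring_nf
    ring_nf at h0
    linarith [h0]
  obtain ⟨j₀⟩ := ‹Nonempty V›
  have hker : LinearMap.ker T ≤ Submodule.span ℝ {(fun _ => (1 : ℝ) : V → ℝ)} := by
    intro a ha
    rw [LinearMap.mem_ker] at ha
    have hconst : ∀ j, a j = a j₀ := by
      intro j
      have h1 := hSj a ha j
      have h2 := hSj a ha j₀
      have hrc : r ^ 2 - c ≠ 0 := sub_ne_zero.mpr (Ne.symm hc)
      have : a j * (r ^ 2 - c) = a j₀ * (r ^ 2 - c) := by linarith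
      exact mul_right_cancel₀ hrc this
    rw [Submodule.mem_span_singleton]
    exact ⟨a j₀, by funext j; simp [(hconst j).symm]⟩
  have hone : ((fun _ => (1 : ℝ)) : V → ℝ) ≠ 0 := by
    intro h
    simpa using congrFun h j₀
  have h1 : Module.finrank ℝ (LinearMap.ker T) ≤ 1 := by
    have := Submodule.finrank_mono hker
    rwa [finrank_span_singleton hone] at this
  have h2 := LinearMap.finrank_range_add_finrank_ker T
  have h3 : Module.finrank ℝ (LinearMap.range T) ≤ n + 1 := by
    have := Submodule.finrank_le (LinearMap.range T)
    rwa [finrank_euclideanSpace_fin] at this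
  have h4 : Module.finrank ℝ (V → ℝ) = Fintype.card V := Module.finrank_pi ℝ
  omega


lemma walk_closure {V : Type*} {G : SimpleGraph V} {z : V}
    (hcl : ∀ v' w', G.Adj z v' → G.Adj v' w' → w' ≠ z → ¬G.Adj z w' → False) :
    ∀ {a b : V} (q : G.Walk a b), b = z → (a = z ∨ G.Adj z a) := by
  intro a b q
  induction q with
  | nil => intro h; exact Or.inl h
  | @cons x y _ hxy q ih =>
    intro hbz
    rcases ih hbz with rfl | hzy
    · exact Or.inr hxy.symm
    · by_cases hxz : x = z
      · exact Or.inl hxz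
      · by_cases hzx : G.Adj z x
        · exact Or.inr hzx
        · exact (hcl y x hzy hxy.symm hxz hzx).elim

end SphereAux

open SphereAux in
theorem sphere_embedding_classification {n : ℕ} (hn : 2 ≤ n) {r : ℝ} (hr : 0 < r)
    {V : Type*} [Fintype V] (G : SimpleGraph V) (hconn : G.Connected)
    (f : V → EuclideanSpace ℝ (Fin (n + 1)))
    (hsph : ∀ x, ‖f x‖ = r) (hinj : Function.Injective f)
    (hiso : ∀ x y : V, (G.dist x y : ℝ) = sphereGeoDist r (f x) (f y)) :
    (∃ k : ℕ, 1 ≤ k ∧ Nonempty (G ≃g SimpleGraph.pathGraph k)) ∨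
    (∃ k : ℕ, 3 ≤ k ∧ Nonempty (G ≃g SimpleGraph.cycleGraph k)) ∨
    (G = ⊤ ∧ Fintype.card V ≤ n + 2) ∨
    (∃ ι : V → Fin (n + 1) × Bool, Function.Injective ι ∧
      ∀ x y : V, G.Adj x y → (GnAbs n).Adj (ι x) (ι y)) := by
  classical
  have hrne : r ≠ 0 := ne_of_gt hr
  have hr2 : (0 : ℝ) < r ^ 2 := by positivity
  -- inner ℝ product formula and bound
  have hboth : ∀ x y : V, (inner ℝ (f x) (f y) : ℝ) = r ^ 2 * Real.cos ((G.dist x y : ℝ) / r)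
      ∧ (G.dist x y : ℝ) / r ≤ π := by
    intro x y
    have h := hiso x y
    unfold sphereGeoDist at h
    have hb : |(inner ℝ (f x) (f y) : ℝ)| ≤ r ^ 2 := by
      have := abs_real_inner_le_norm (f x) (f y)
      rw [hsph x, hsph y] at this
      nlinarith [this]
    have hs1 : -1 ≤ (inner ℝ (f x) (f y) : ℝ) / r ^ 2 := by
      rw [neg_le, ← neg_div]
      apply div_le_one_of_le₀ (by cases abs_le.mp hb with | intro h1 h2 => linarith) hr2.le
    have hs2 : (inner ℝ (f x) (f y) : ℝ) / r ^ 2 ≤ 1 := by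
      apply div_le_one_of_le₀ (by cases abs_le.mp hb with | intro h1 h2 => linarith) hr2.le
    have harc : Real.arccos ((inner ℝ (f x) (f y) : ℝ) / r ^ 2) = (G.dist x y : ℝ) / r := by
      rw [h, mul_div_cancel_left₀ _ hrne]
    constructor
    · have hcos : Real.cos ((G.dist x y : ℝ) / r) = (inner ℝ (f x) (f y) : ℝ) / r ^ 2 := by
        rw [← harc]; exact Real.cos_arccos hs1 hs2
      rw [hcos]
      field_simp
    · rw [← harc]; exact Real.arccos_le_pi _
  have hip : ∀ x y : V, (inner ℝ (f x) (f y) : ℝ) = r ^ 2 * Real.cos ((G.dist x y : ℝ) / r) :=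
    fun x y => (hboth x y).1
  have hdle : ∀ x y : V, (G.dist x y : ℝ) / r ≤ π := fun x y => (hboth x y).2
  by_cases hcomp : ∀ x y : V, x ≠ y → G.Adj x y
  · -- complete graph
    right; right; left
    have hGtop : G = ⊤ := by
      ext x y
      simp only [SimpleGraph.top_adj]
      exact ⟨fun h => G.ne_of_adj h, fun h => hcomp x y h⟩
    refine ⟨hGtop, ?_⟩
    by_cases hcard : Fintype.card V ≤ 1
    · omega
    · push_neg at hcard
      obtain ⟨x₀, y₀, hxy₀⟩ := Fintype.one_lt_card_iff.mp hcard
      have hne : Nonempty V := ⟨x₀⟩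
      have hd1 : G.dist x₀ y₀ = 1 := SimpleGraph.dist_eq_one_iff_adj.mpr (hcomp _ _ hxy₀)
      have hθle : 1 / r ≤ π := by
        have := hdle x₀ y₀
        rwa [hd1, Nat.cast_one] at this
      have hcoslt : Real.cos (1 / r) < 1 := by
        have := Real.cos_lt_cos_of_nonneg_of_le_pi (le_refl 0) hθle (by positivity)
        rwa [Real.cos_zero] at this
      have hc : r ^ 2 * Real.cos (1 / r) ≠ r ^ 2 := by
        have : r ^ 2 * Real.cos (1 / r) < r ^ 2 := by nlinarith
        exact ne_of_lt this
      apply card_le_of_equal_inner hc f hsph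
      intro x y hxy
      have hd : G.dist x y = 1 := SimpleGraph.dist_eq_one_iff_adj.mpr (hcomp x y hxy)
      rw [hip, hd, Nat.cast_one]
  · -- not complete
    push_neg at hcomp
    obtain ⟨u, w, huw, hnadj⟩ := hcomp
    have hd2 : 2 ≤ G.dist u w := by
      have h1 := hconn.pos_dist_of_ne huw
      have h2 : G.dist u w ≠ 1 := fun h => hnadj (SimpleGraph.dist_eq_one_iff_adj.mp h)
      omega
    have hθ2 : 2 / r ≤ π := by
      have h1 := hdle u w
      have h2 : (2 : ℝ) ≤ (G.dist u w : ℝ) := by exact_mod_cast hd2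
      calc 2 / r ≤ (G.dist u w : ℝ) / r := by gcongr
        _ ≤ π := h1
    have hθpos : (0:ℝ) < 1 / r := by positivity
    by_cases hhalf : 1 / r = π / 2
    · -- G_n case
      right; right; right
      have hπ : (0:ℝ) < π := Real.pi_pos
      have hd12' : ∀ x y : V, x ≠ y → (G.dist x y = 1 ∨ G.dist x y = 2) := by
        intro x y hxy
        have hpos := hconn.pos_dist_of_ne hxy
        have hub : (G.dist x y : ℝ) ≤ 2 := by
          have h1 := hdle x y
          rw [div_le_iff₀ hr] at h1
          have hrv : π * r = 2 := by
            have : r * (1 / r) = r * (π / 2) := by rw [hhalf]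
            rw [mul_one_div, div_self hrne] at this
            nlinarith [this]
          linarith
        have : G.dist x y ≤ 2 := by exact_mod_cast hub
        omega
      have hinner1 : ∀ x y : V, G.dist x y = 1 → (inner ℝ (f x) (f y) : ℝ) = 0 := by
        intro x y h
        rw [hip, h, Nat.cast_one, hhalf, Real.cos_pi_div_two, mul_zero]
      have hanti : ∀ x y : V, G.dist x y = 2 → f y = - f x := by
        intro x y h
        have hin : (inner ℝ (f x) (f y) : ℝ) = - r ^ 2 := by
          rw [hip, h]
          have h2 : ((2:ℕ):ℝ)/r = 2 * (1/r) := by push_cast; ring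
          rw [h2, hhalf]
          have h3 : 2 * (π/2) = π := by ring
          rw [h3, Real.cos_pi]; ring
        have hz : (inner ℝ (f y + f x) (f y + f x) : ℝ) = 0 := by
          have e3 : (inner ℝ (f y) (f x) : ℝ) = - r ^ 2 := by rw [real_inner_comm]; exact hin
          simp only [inner_add_left, inner_add_right, real_inner_self_eq_norm_sq, hsph]
          linarith [e3, hin]
        exact eq_neg_of_add_eq_zero_left ((inner_self_eq_zero (𝕜 := ℝ)).mp hz)
      let srel : Setoid V :=
        { r := fun x y => f x = f y ∨ f x = - f y
          iseqv := by
            constructor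
            · intro x; exact Or.inl rfl
            · intro x y h
              rcases h with h | h
              · exact Or.inl h.symm
              · right; rw [h]; simp
            · intro x y z h1 h2
              rcases h1 with h1 | h1 <;> rcases h2 with h2 | h2
              · exact Or.inl (h1.trans h2)
              · exact Or.inr (by rw [h1, h2])
              · right; rw [h1, h2]
              · left; rw [h1, h2]; simp }
      have hrelout : ∀ x : V, f x = f ((Quotient.mk srel x).out) ∨
          f x = - f ((Quotient.mk srel x).out) :=
        fun x => Quotient.exact ((Quotient.out_eq (Quotient.mk srel x)).symm)
      have hONfam : Orthonormal ℝ (fun q : Quotient srel => (r⁻¹ : ℝ) • f q.out) := by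
        constructor
        · intro q
          rw [norm_smul, hsph, norm_inv, Real.norm_eq_abs, abs_of_pos hr]
          exact inv_mul_cancel₀ hrne
        · intro q q' hqq'
          have hne2 : q.out ≠ q'.out := fun h => hqq' (by
            rw [← Quotient.out_eq q, ← Quotient.out_eq q', h])
          have hnrel : ¬ (f q.out = f q'.out ∨ f q.out = - f q'.out) := by
            intro hrel
            exact hqq' (by
              rw [← Quotient.out_eq q, ← Quotient.out_eq q']
              exact Quotient.sound hrel)
          have hd : G.dist q.out q'.out = 1 := by
            rcases hd12' _ _ hne2 with h | h
            · exact h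
            · exact absurd (Or.inr (by rw [hanti _ _ h]; simp)) hnrel
          have h0 : (inner ℝ (f q.out) (f q'.out) : ℝ) = 0 := hinner1 _ _ hd
          rw [real_inner_smul_left, real_inner_smul_right, h0]
          ring
      have hcardQ : Fintype.card (Quotient srel) ≤ n + 1 := by
        have hli := hONfam.linearIndependent
        have := hli.fintype_card_le_finrank
        rwa [finrank_euclideanSpace_fin] at this
      obtain ⟨emb⟩ : Nonempty (Quotient srel ↪ Fin (n + 1)) :=
        Function.Embedding.nonempty_iff_card_le.mpr (by simpa using hcardQ)
      refine ⟨fun x => (emb (Quotient.mk srel x),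
        if f x = f ((Quotient.mk srel x).out) then true else false), ?_, ?_⟩
      · intro x y hxy2
        have h1 : emb (Quotient.mk srel x) = emb (Quotient.mk srel y) :=
          congrArg Prod.fst hxy2
        have h2 := congrArg Prod.snd hxy2
        simp only at h2
        have hq : Quotient.mk srel x = Quotient.mk srel y := emb.injective h1
        have hxout := hrelout x
        have hyout := hrelout y
        rw [← hq] at hyout h2
        apply hinj
        by_cases hfx : f x = f ((Quotient.mk srel x).out) <;>
          by_cases hfy : f y = f ((Quotient.mk srel x).out) <;>
          simp [hfx, hfy] at h2
        · rw [hfx, hfy]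
        · rcases hxout with h | h
          · exact absurd h hfx
          · rcases hyout with h' | h'
            · exact absurd h' hfy
            · rw [h, h']
      · intro x y hadj
        have hfst : emb (Quotient.mk srel x) ≠ emb (Quotient.mk srel y) := by
          intro heq
          have hq : Quotient.mk srel x = Quotient.mk srel y := emb.injective heq
          have hrel : f x = f y ∨ f x = - f y := Quotient.exact hq
          have hd1 : G.dist x y = 1 := SimpleGraph.dist_eq_one_iff_adj.mpr hadj
          have h0 : (inner ℝ (f x) (f y) : ℝ) = 0 := hinner1 _ _ hd1
          rcases hrel with h | h
          · exact G.loopless.irrefl x (hinj h ▸ hadj)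
          · rw [h] at h0
            simp only [inner_neg_left] at h0
            rw [real_inner_self_eq_norm_sq, hsph] at h0
            nlinarith [h0]
        exact hfst
    · -- path or cycle case
      have hθlt : 1 / r < π / 2 := by
        refine lt_of_le_of_ne ?_ hhalf
        have h48 : 2 / r = 2 * (1 / r) := by ring
        linarith
      set t := Real.cos (1 / r) with ht_def
      have ht0 : 0 < t := Real.cos_pos_of_mem_Ioo ⟨by nlinarith [Real.pi_pos], hθlt⟩
      have ht1 : t < 1 := by
        have := Real.cos_lt_cos_of_nonneg_of_le_pi (le_refl 0)
          (by nlinarith [Real.pi_pos]) hθpos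
        rwa [Real.cos_zero] at this
      have hdadj : ∀ x y : V, G.Adj x y → (inner ℝ (f x) (f y) : ℝ) = r ^ 2 * t := by
        intro x y h
        rw [hip, SimpleGraph.dist_eq_one_iff_adj.mpr h, Nat.cast_one]
      have hd2inner : ∀ x y : V, G.dist x y = 2 →
          (inner ℝ (f x) (f y) : ℝ) = r ^ 2 * (2 * t ^ 2 - 1) := by
        intro x y h
        rw [hip, h]
        have h2 : ((2:ℕ):ℝ)/r = 2 * (1/r) := by push_cast; ring
        rw [h2, Real.cos_two_mul]
      have hd12 : ∀ x y : V, x ≠ y → G.dist x y ≤ 2 →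
          ((inner ℝ (f x) (f y) : ℝ) = r ^ 2 * t ∨
            (inner ℝ (f x) (f y) : ℝ) = r ^ 2 * (2 * t ^ 2 - 1)) := by
        intro x y hne hle
        have hpos := hconn.pos_dist_of_ne hne
        have : G.dist x y = 1 ∨ G.dist x y = 2 := by omega
        rcases this with h | h
        · left; rw [hip, h, Nat.cast_one]
        · right; exact hd2inner x y h
      have hdeg : ∀ z a b c : V, G.Adj z a → G.Adj z b → G.Adj z c →
          a ≠ b → a ≠ c → b ≠ c → False := by
        intro z a₀ b₀ c₀ hza hzb hzc hab hac hbc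
        have hnbradj : ∀ u' v' : V, G.Adj z u' → G.Adj z v' → u' ≠ v' → G.Adj u' v' := by
          intro u' v' hzu hzv huv
          by_contra hnadj'
          have hdunv : G.dist u' v' = 2 := by
            have hle2 : G.dist u' v' ≤ 2 := by
              have h3 := hconn.dist_triangle (u := u') (v := z) (w := v')
              rw [SimpleGraph.dist_eq_one_iff_adj.mpr hzu.symm,
                SimpleGraph.dist_eq_one_iff_adj.mpr hzv] at h3
              omega
            have h1 := hconn.pos_dist_of_ne huv
            have h2 : G.dist u' v' ≠ 1 := fun h =>
              hnadj' (SimpleGraph.dist_eq_one_iff_adj.mp h)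
            omega
          obtain ⟨c₁, hzc₁, hc₁u, hc₁v⟩ : ∃ c₁, G.Adj z c₁ ∧ c₁ ≠ u' ∧ c₁ ≠ v' := by
            by_cases h1 : a₀ ≠ u' ∧ a₀ ≠ v'
            · exact ⟨a₀, hza, h1.1, h1.2⟩
            · by_cases h2 : b₀ ≠ u' ∧ b₀ ≠ v'
              · exact ⟨b₀, hzb, h2.1, h2.2⟩
              · push_neg at h1 h2
                refine ⟨c₀, hzc, ?_, ?_⟩
                · rintro rfl
                  by_cases ha' : a₀ = c₀
                  · exact hac ha'
                  · have h1' := h1 ha'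
                    by_cases hb' : b₀ = c₀
                    · exact hbc hb'
                    · exact hab (h1'.trans (h2 hb').symm)
                · rintro rfl
                  by_cases ha' : a₀ = u'
                  · by_cases hb' : b₀ = u'
                    · exact hab (ha'.trans hb'.symm)
                    · exact hbc (h2 hb')
                  · exact hac (h1 ha')
          have hduc : G.dist u' c₁ ≤ 2 := by
            have h3 := hconn.dist_triangle (u := u') (v := z) (w := c₁)
            rw [SimpleGraph.dist_eq_one_iff_adj.mpr hzu.symm,
              SimpleGraph.dist_eq_one_iff_adj.mpr hzc₁] at h3
            omega
          have hdvc : G.dist v' c₁ ≤ 2 := by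
            have h3 := hconn.dist_triangle (u := v') (v := z) (w := c₁)
            rw [SimpleGraph.dist_eq_one_iff_adj.mpr hzv.symm,
              SimpleGraph.dist_eq_one_iff_adj.mpr hzc₁] at h3
            omega
          exact SphereAux.keyL hr ht0 ht1 (hsph z) (hsph u') (hsph v')
            (hdadj z u' hzu) (hdadj z v' hzv) (hdadj z c₁ hzc₁)
            (hd2inner u' v' hdunv)
            (hd12 u' c₁ (fun h => hc₁u h.symm) hduc)
            (hd12 v' c₁ (fun h => hc₁v h.symm) hdvc)
        have hclose : ∀ v' w' : V, G.Adj z v' → G.Adj v' w' → w' ≠ z →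
            ¬G.Adj z w' → False := by
          intro v' w' hzv hvw hwz hnzw
          have hdzw : G.dist z w' = 2 := by
            have hle2 : G.dist z w' ≤ 2 := by
              have h3 := hconn.dist_triangle (u := z) (v := v') (w := w')
              rw [SimpleGraph.dist_eq_one_iff_adj.mpr hzv,
                SimpleGraph.dist_eq_one_iff_adj.mpr hvw] at h3
              omega
            have h1 := hconn.pos_dist_of_ne (Ne.symm hwz)
            have h2 : G.dist z w' ≠ 1 := fun h =>
              hnzw (SimpleGraph.dist_eq_one_iff_adj.mp h)
            omega
          obtain ⟨b₁, hzb₁, hb₁v⟩ : ∃ b₁, G.Adj z b₁ ∧ b₁ ≠ v' := by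
            by_cases h : a₀ = v'
            · exact ⟨b₀, hzb, fun hh => hab (h ▸ hh ▸ rfl)⟩
            · exact ⟨a₀, hza, h⟩
          have hvb₁ : G.Adj v' b₁ := hnbradj v' b₁ hzv hzb₁ (Ne.symm hb₁v)
          have hwb₁ne : w' ≠ b₁ := fun h => hnzw (h ▸ hzb₁)
          have hdwb : G.dist w' b₁ ≤ 2 := by
            have h3 := hconn.dist_triangle (u := w') (v := v') (w := b₁)
            rw [SimpleGraph.dist_eq_one_iff_adj.mpr hvw.symm,
              SimpleGraph.dist_eq_one_iff_adj.mpr hvb₁] at h3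
            omega
          exact SphereAux.keyL hr ht0 ht1 (hsph v') (hsph z) (hsph w')
            (hdadj v' z hzv.symm) (hdadj v' w' hvw) (hdadj v' b₁ hvb₁)
            (hd2inner z w' hdzw)
            (Or.inl (hdadj z b₁ hzb₁))
            (hd12 w' b₁ hwb₁ne hdwb)
        have hallz : ∀ w', w' ≠ z → G.Adj z w' := by
          intro w' hwz
          obtain ⟨q⟩ := hconn.preconnected w' z
          rcases SphereAux.walk_closure hclose q rfl with rfl | h
          · exact absurd rfl hwz
          · exact h
        by_cases huz : u = z
        · subst huz
          exact hnadj (hallz w (Ne.symm huw))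
        · by_cases hwz : w = z
          · subst hwz
            exact hnadj ((hallz u huz).symm)
          · exact hnadj (hnbradj u w (hallz u huz) (hallz w hwz) huw)
      rcases SphereAux.path_or_cycle G hconn hdeg with h | h
      · exact Or.inl h
      · exact Or.inr (Or.inl h)
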